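/- Let m ∈ ℕ, D = Π_{k=1}^m [a_k, b_k] with a_k < b_k for all k, and F : D → ℝ^m a continuous function each of whose components F_k is monotonically increasing in each of its m arguments. Define F_k^- = F_k(b_1,...,b_{k−1}, a_k, b_{k+1},...,b_m) and F_k^+ = F_k(a_1,...,a_{k−1}, b_k, a_{k+1},...,a_m), and suppose F_k^- < F_k^+ for every k. Then for any F* ∈ Π_{k=1}^m [F_k^-, F_k^+] there exists x ∈ D with F(x) = F*. -/

import Mathlib

namespace PM

open Finset

variable {n N : ℕ}

abbrev Pt (n : ℕ) := Fin n → ℕ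

abbrev Simp (n N : ℕ) := (Fin n → Fin N) × Equiv.Perm (Fin n)

def vtx (s : Simp n N) (i : Fin (n+1)) : Pt n :=
  fun k => (s.1 k : ℕ) + if ((s.2.symm k : ℕ) < (i : ℕ)) then 1 else 0

lemma vtx_le (s : Simp n N) (i : Fin (n+1)) (k : Fin n) : vtx s i k ≤ N := by
  have := (s.1 k).isLt
  unfold vtx
  split <;> omega

-- ### pivots (stated at level n+1)

def aIdx (i : Fin (n+2)) : Fin (n+1) := ⟨(i:ℕ) - 1, by omega⟩
def bIdx (i : Fin (n+2)) : Fin (n+1) := ⟨min (i:ℕ) n, by omega⟩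

def pivotMid (s : Simp (n+1) N) (i : Fin (n+2)) : Simp (n+1) N :=
  (s.1, (Equiv.swap (aIdx i) (bIdx i)).trans s.2)

def pivot0 (s : Simp (n+1) N) (hb : (s.1 (s.2 0) : ℕ) + 1 < N) : Simp (n+1) N :=
  (fun k => if k = s.2 0 then ⟨(s.1 (s.2 0) : ℕ) + 1, hb⟩ else s.1 k,
   (finRotate (n+1)).trans s.2)

def pivotLast (s : Simp (n+1) N) : Simp (n+1) N :=
  (fun k => if k = s.2 (Fin.last n) then
      ⟨(s.1 k : ℕ) - 1, Nat.lt_of_le_of_lt (Nat.sub_le _ _) (s.1 k).isLt⟩ else s.1 k,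
   (finRotate (n+1)).symm.trans s.2)

lemma val_ne_of_ne {m : ℕ} {x y : Fin m} (h : x ≠ y) : (x:ℕ) ≠ (y:ℕ) :=
  fun hc => h (Fin.ext hc)

-- value lemmas for bases
lemma pivot0_base_val (s : Simp (n+1) N) (hb : (s.1 (s.2 0) : ℕ) + 1 < N) (k : Fin (n+1)) :
    ((pivot0 s hb).1 k : ℕ) = if k = s.2 0 then (s.1 (s.2 0) : ℕ) + 1 else (s.1 k : ℕ) := by
  have h : (pivot0 s hb).1 k = if k = s.2 0 then ⟨(s.1 (s.2 0) : ℕ) + 1, hb⟩ else s.1 k := rfl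
  rw [h]; split <;> rfl

lemma pivotLast_base_val (s : Simp (n+1) N) (k : Fin (n+1)) :
    ((pivotLast s).1 k : ℕ) = if k = s.2 (Fin.last n) then (s.1 k : ℕ) - 1 else (s.1 k : ℕ) := by
  have h : (pivotLast s).1 k = if k = s.2 (Fin.last n) then
      ⟨(s.1 k : ℕ) - 1, Nat.lt_of_le_of_lt (Nat.sub_le _ _) (s.1 k).isLt⟩ else s.1 k := rfl
  rw [h]; split <;> rfl

lemma pivot0_symm_val (s : Simp (n+1) N) (hb : (s.1 (s.2 0) : ℕ) + 1 < N) (k : Fin (n+1)) :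
    ((pivot0 s hb).2.symm k : ℕ)
      = if s.2.symm k = 0 then n else (s.2.symm k : ℕ) - 1 := by
  have h1 : ((pivot0 s hb).2).symm k = s.2.symm k - 1 := by
    show (((finRotate (n+1)).trans s.2).symm) k = _
    rw [Equiv.symm_trans_apply]
    rw [Equiv.symm_apply_eq, finRotate_succ_apply, sub_add_cancel]
  rw [h1, Fin.coe_sub_one]

lemma pivotLast_symm_val (s : Simp (n+1) N) (k : Fin (n+1)) :
    ((pivotLast s).2.symm k : ℕ)
      = if s.2.symm k = Fin.last n then 0 else (s.2.symm k : ℕ) + 1 := by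
  have h1 : ((pivotLast s).2).symm k = s.2.symm k + 1 := by
    show (((finRotate (n+1)).symm.trans s.2).symm) k = _
    rw [Equiv.symm_trans_apply, Equiv.symm_symm, finRotate_succ_apply]
  rw [h1, Fin.val_add_one]

lemma pivotMid_symm (s : Simp (n+1) N) (i : Fin (n+2)) (k : Fin (n+1)) :
    (pivotMid s i).2.symm k = Equiv.swap (aIdx i) (bIdx i) (s.2.symm k) := by
  show (((Equiv.swap (aIdx i) (bIdx i)).trans s.2).symm) k = _
  rw [Equiv.symm_trans_apply, Equiv.symm_swap]

lemma vtx_pivotMid (s : Simp (n+1) N) (i : Fin (n+2)) (h0 : i ≠ 0) (hl : i ≠ Fin.last (n+1))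
    (j : Fin (n+2)) (hj : j ≠ i) : vtx (pivotMid s i) j = vtx s j := by
  have h0' : 0 < (i:ℕ) := Nat.pos_of_ne_zero (val_ne_of_ne h0)
  have hl' : (i:ℕ) < n+1 := by
    have := i.isLt
    have := val_ne_of_ne hl
    simp only [Fin.val_last] at this
    omega
  have hj' : (j:ℕ) ≠ (i:ℕ) := val_ne_of_ne hj
  funext k
  show ((pivotMid s i).1 k : ℕ) + _ = (s.1 k : ℕ) + _
  have hbase : (pivotMid s i).1 k = s.1 k := rfl
  rw [hbase, pivotMid_symm]
  have ha : ((aIdx i : Fin (n+1)) : ℕ) = (i:ℕ) - 1 := rfl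
  have hb : ((bIdx i : Fin (n+1)) : ℕ) = (i:ℕ) := by
    simp only [bIdx]; omega
  congr 1
  rcases eq_or_ne (s.2.symm k) (aIdx i) with h | h
  · rw [h, Equiv.swap_apply_left, hb, ha]
    rcases Nat.lt_or_ge ((i:ℕ)) ((j:ℕ)) with hc | hc
    · rw [if_pos (by omega), if_pos (by omega)]
    · rw [if_neg (by omega), if_neg (by omega)]
  · rcases eq_or_ne (s.2.symm k) (bIdx i) with h2 | h2
    · rw [h2, Equiv.swap_apply_right, ha, hb]
      rcases Nat.lt_or_ge ((i:ℕ)) ((j:ℕ)) with hc | hc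
      · rw [if_pos (by omega), if_pos (by omega)]
      · rw [if_neg (by omega), if_neg (by omega)]
    · rw [Equiv.swap_apply_of_ne_of_ne h h2]

lemma vtx_pivot0 (s : Simp (n+1) N) (hb : (s.1 (s.2 0) : ℕ) + 1 < N) (j : Fin (n+1)) :
    vtx (pivot0 s hb) j.castSucc = vtx s j.succ := by
  funext k
  show ((pivot0 s hb).1 k : ℕ) + _ = (s.1 k : ℕ) + _
  have hsv := pivot0_symm_val s hb k
  have hbv := pivot0_base_val s hb k
  have hj := j.isLt
  rcases eq_or_ne (s.2.symm k) 0 with h | h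
  · have hk : k = s.2 0 := by rw [← h, Equiv.apply_symm_apply]
    rw [if_pos h] at hsv
    rw [if_pos hk] at hbv
    rw [hbv, hsv]
    rw [if_neg (by simp only [Fin.coe_castSucc]; omega),
      if_pos (by simp only [Fin.val_succ, h, Fin.val_zero]; omega)]
    rw [hk]
  · have hk : k ≠ s.2 0 := fun hc => h (by rw [hc, Equiv.symm_apply_apply])
    rw [if_neg h] at hsv
    rw [if_neg hk] at hbv
    rw [hbv, hsv]
    have h1 : 0 < ((s.2.symm k) : ℕ) := Nat.pos_of_ne_zero (val_ne_of_ne h)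
    congr 1
    simp only [Fin.coe_castSucc, Fin.val_succ]
    rcases Nat.lt_or_ge ((s.2.symm k : ℕ)) ((j:ℕ)+1) with hc | hc
    · rw [if_pos (by omega), if_pos (by omega)]
    · rw [if_neg (by omega), if_neg (by omega)]

lemma vtx_pivotLast (s : Simp (n+1) N) (hb : 1 ≤ (s.1 (s.2 (Fin.last n)) : ℕ)) (j : Fin (n+1)) :
    vtx (pivotLast s) j.succ = vtx s j.castSucc := by
  funext k
  show ((pivotLast s).1 k : ℕ) + _ = (s.1 k : ℕ) + _
  have hsv := pivotLast_symm_val s k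
  have hbv := pivotLast_base_val s k
  rcases eq_or_ne (s.2.symm k) (Fin.last n) with h | h
  · have hk : k = s.2 (Fin.last n) := by rw [← h, Equiv.apply_symm_apply]
    rw [if_pos h] at hsv
    rw [if_pos hk] at hbv
    rw [hbv, hsv]
    rw [if_pos (by simp only [Fin.val_succ]; omega),
      if_neg (by simp only [Fin.coe_castSucc, h, Fin.val_last]; omega)]
    have hbk : 1 ≤ (s.1 k : ℕ) := by rw [hk]; exact hb
    omega
  · have hk : k ≠ s.2 (Fin.last n) := fun hc => h (by rw [hc, Equiv.symm_apply_apply])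
    rw [if_neg h] at hsv
    rw [if_neg hk] at hbv
    rw [hbv, hsv]
    congr 1
    simp only [Fin.val_succ, Fin.coe_castSucc]
    rcases Nat.lt_or_ge ((s.2.symm k : ℕ)) ((j:ℕ)) with hc | hc
    · rw [if_pos (by omega), if_pos (by omega)]
    · rw [if_neg (by omega), if_neg (by omega)]

-- involutivity
lemma pivot0_perm_last (s : Simp (n+1) N) (hb : (s.1 (s.2 0) : ℕ) + 1 < N) :
    (pivot0 s hb).2 (Fin.last n) = s.2 0 := by
  show ((finRotate (n+1)).trans s.2) (Fin.last n) = s.2 0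
  rw [Equiv.trans_apply, finRotate_last]

lemma pivotLast_perm_zero (s : Simp (n+1) N) :
    (pivotLast s).2 0 = s.2 (Fin.last n) := by
  have h : (finRotate (n+1)).symm 0 = Fin.last n := by
    rw [Equiv.symm_apply_eq, finRotate_last]
  show ((finRotate (n+1)).symm.trans s.2) 0 = s.2 (Fin.last n)
  rw [Equiv.trans_apply, h]

lemma pivotLast_pivot0 (s : Simp (n+1) N) (hb : (s.1 (s.2 0) : ℕ) + 1 < N) :
    pivotLast (pivot0 s hb) = s := by
  have hperm : (pivot0 s hb).2 (Fin.last n) = s.2 0 := pivot0_perm_last s hb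
  ext1
  · funext k
    apply Fin.ext
    rw [pivotLast_base_val, hperm]
    rcases eq_or_ne k (s.2 0) with h | h
    · rw [if_pos h, pivot0_base_val, if_pos h, h]
      omega
    · rw [if_neg h, pivot0_base_val, if_neg h]
  · show ((finRotate (n+1)).symm.trans ((finRotate (n+1)).trans s.2)) = s.2
    rw [← Equiv.trans_assoc, Equiv.symm_trans_self, Equiv.refl_trans]

lemma pivot0_pivotLast (s : Simp (n+1) N) (hb : 1 ≤ (s.1 (s.2 (Fin.last n)) : ℕ))
    (hb' : ((pivotLast s).1 ((pivotLast s).2 0) : ℕ) + 1 < N) :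
    pivot0 (pivotLast s) hb' = s := by
  have hperm : (pivotLast s).2 0 = s.2 (Fin.last n) := pivotLast_perm_zero s
  ext1
  · funext k
    apply Fin.ext
    rw [pivot0_base_val, hperm]
    rcases eq_or_ne k (s.2 (Fin.last n)) with h | h
    · rw [if_pos h, pivotLast_base_val, if_pos rfl, h]
      omega
    · rw [if_neg h, pivotLast_base_val, if_neg h]
  · show ((finRotate (n+1)).trans ((finRotate (n+1)).symm.trans s.2)) = s.2
    rw [← Equiv.trans_assoc, Equiv.self_trans_symm, Equiv.refl_trans]

lemma pivotMid_pivotMid (s : Simp (n+1) N) (i : Fin (n+2)) :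
    pivotMid (pivotMid s i) i = s := by
  unfold pivotMid
  ext1
  · rfl
  · simp only
    rw [← Equiv.trans_assoc, Equiv.swap_swap, Equiv.refl_trans]

lemma pivotMid_ne (s : Simp (n+1) N) (i : Fin (n+2)) (h0 : i ≠ 0) (hl : i ≠ Fin.last (n+1)) :
    pivotMid s i ≠ s := by
  intro hc
  have h0' : 0 < (i:ℕ) := Nat.pos_of_ne_zero (val_ne_of_ne h0)
  have hl' : (i:ℕ) < n+1 := by
    have := i.isLt
    have := val_ne_of_ne hl
    simp only [Fin.val_last] at this
    omega
  have hab : aIdx i ≠ bIdx i := by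
    intro h
    have := congrArg (Fin.val) h
    simp only [aIdx, bIdx] at this
    omega
  have h1 : (Equiv.swap (aIdx i) (bIdx i)).trans s.2 = s.2 := congrArg Prod.snd hc
  have h2 : Equiv.swap (aIdx i) (bIdx i) = Equiv.refl _ := by
    have := congrArg (fun e => e.trans s.2.symm) h1
    simp only [Equiv.trans_assoc, Equiv.self_trans_symm, Equiv.trans_refl] at this
    exact this
  have h3 : Equiv.swap (aIdx i) (bIdx i) (aIdx i) = aIdx i := by rw [h2]; rfl
  rw [Equiv.swap_apply_left] at h3
  exact hab h3.symm

-- ### labels and doors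


def vlab (lab : Pt n → Fin (n+1)) (s : Simp n N) (i : Fin (n+1)) : Fin (n+1) :=
  lab (vtx s i)

abbrev IsFull (lab : Pt n → Fin (n+1)) (s : Simp n N) : Prop :=
  image (vlab lab s) univ = univ

abbrev DoorAt (lab : Pt n → Fin (n+1)) (s : Simp n N) (i : Fin (n+1)) : Prop :=
  image (vlab lab s) (univ.erase i) = univ.erase (Fin.last n)

structure OKLab (n N : ℕ) (lab : Pt n → Fin (n+1)) : Prop where
  bot : ∀ v : Pt n, (∀ j, v j ≤ N) → ∀ k : Fin n, v k = 0 → lab v ≠ Fin.castSucc k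
  top : ∀ v : Pt n, (∀ j, v j ≤ N) → ∀ k : Fin n, v k = N → (lab v : ℕ) ≤ (k : ℕ)

def fullCount (n N : ℕ) (lab : Pt n → Fin (n+1)) : ℕ :=
  (univ.filter (fun s : Simp n N => IsFull lab s)).card

-- membership of a label in a door facet
lemma door_label_mem {lab : Pt (n+1) → Fin (n+2)} {s : Simp (n+1) N} {i : Fin (n+2)}
    (hd : DoorAt lab s i) (c : Fin (n+2)) (hc : c ≠ Fin.last (n+1)) :
    ∃ j : Fin (n+2), j ≠ i ∧ vlab lab s j = c := by
  have : c ∈ image (vlab lab s) (univ.erase i) := by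
    rw [hd]; exact Finset.mem_erase.2 ⟨hc, mem_univ _⟩
  obtain ⟨j, hj, hjc⟩ := Finset.mem_image.1 this
  exact ⟨j, (Finset.mem_erase.1 hj).1, hjc⟩

/-- a door with `i = last` has `1 ≤ p (π (last))`. -/
lemma door_last_pos {lab : Pt (n+1) → Fin (n+2)} (hok : OKLab (n+1) N lab)
    {s : Simp (n+1) N} (hd : DoorAt lab s (Fin.last (n+1))) :
    1 ≤ (s.1 (s.2 (Fin.last n)) : ℕ) := by
  by_contra hc
  set k₀ : Fin (n+1) := s.2 (Fin.last n) with hk₀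
  have hp : (s.1 k₀ : ℕ) = 0 := by omega
  obtain ⟨j, hj, hjc⟩ := door_label_mem hd (Fin.castSucc k₀)
    (by simp [Fin.ext_iff]; have := k₀.isLt; omega)
  have hvz : vtx s j k₀ = 0 := by
    unfold vtx
    rw [hp]
    have h1 : (s.2.symm k₀ : ℕ) = n := by rw [hk₀, Equiv.symm_apply_apply]; rfl
    rw [h1, if_neg]
    have hjlt := j.isLt
    have hjne : (j:ℕ) ≠ n+1 := val_ne_of_ne hj
    omega
  exact hok.bot (vtx s j) (vtx_le s j) k₀ hvz hjc

/-- a door at `i = 0` on the top boundary forces `π 0 = last`. -/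
lemma door_top_char {lab : Pt (n+1) → Fin (n+2)} (hok : OKLab (n+1) N lab)
    {s : Simp (n+1) N} (hd : DoorAt lab s 0) (htop : (s.1 (s.2 0) : ℕ) + 1 = N) :
    s.2 0 = Fin.last n := by
  set k₀ : Fin (n+1) := s.2 0 with hk₀
  have hvN : ∀ j : Fin (n+2), j ≠ 0 → vtx s j k₀ = N := by
    intro j hj
    unfold vtx
    have h1 : (s.2.symm k₀ : ℕ) = 0 := by rw [hk₀, Equiv.symm_apply_apply]; rfl
    rw [h1, if_pos (Nat.pos_of_ne_zero (val_ne_of_ne hj))]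
    omega
  obtain ⟨j, hj, hjc⟩ := door_label_mem hd (Fin.castSucc (Fin.last n))
    (by simp [Fin.ext_iff])
  have := hok.top (vtx s j) (vtx_le s j) k₀ (hvN j hj)
  unfold vlab at hjc
  rw [hjc] at this
  simp only [Fin.coe_castSucc, Fin.val_last] at this
  apply Fin.ext
  simp only [Fin.val_last]
  have := k₀.isLt
  omega

-- door transfer lemmas
lemma doorAt_pivotMid {lab : Pt (n+1) → Fin (n+2)} (s : Simp (n+1) N) (i : Fin (n+2))
    (h0 : i ≠ 0) (hl : i ≠ Fin.last (n+1)) :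
    DoorAt lab (pivotMid s i) i ↔ DoorAt lab s i := by
  unfold DoorAt
  have : ∀ j ∈ univ.erase i, vlab lab (pivotMid s i) j = vlab lab s j := by
    intro j hj
    unfold vlab
    rw [vtx_pivotMid s i h0 hl j (Finset.mem_erase.1 hj).1]
  rw [Finset.image_congr this]

lemma erase_last_eq_image : (univ.erase (Fin.last (n+1)) : Finset (Fin (n+2)))
    = image Fin.castSucc univ := by
  ext x
  simp only [Finset.mem_erase, mem_univ, and_true, Finset.mem_image, true_and]
  constructor
  · intro h
    obtain ⟨y, hy⟩ := Fin.exists_castSucc_eq.2 h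
    exact ⟨y, hy⟩
  · rintro ⟨y, rfl⟩
    exact Fin.castSucc_lt_last y |>.ne

lemma erase_zero_eq_image : (univ.erase (0 : Fin (n+2)) : Finset (Fin (n+2)))
    = image Fin.succ univ := by
  ext x
  simp only [Finset.mem_erase, mem_univ, and_true, Finset.mem_image, true_and]
  constructor
  · intro h
    obtain ⟨y, hy⟩ := Fin.exists_succ_eq.2 h
    exact ⟨y, hy⟩
  · rintro ⟨y, rfl⟩
    exact (Fin.succ_ne_zero y)

lemma doorAt_pivot0 {lab : Pt (n+1) → Fin (n+2)} (s : Simp (n+1) N)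
    (hb : (s.1 (s.2 0) : ℕ) + 1 < N) :
    DoorAt lab (pivot0 s hb) (Fin.last (n+1)) ↔ DoorAt lab s 0 := by
  unfold DoorAt
  rw [erase_last_eq_image, erase_zero_eq_image, Finset.image_image, Finset.image_image]
  have : (vlab lab (pivot0 s hb)) ∘ Fin.castSucc = (vlab lab s) ∘ Fin.succ := by
    funext j
    simp only [Function.comp_apply]
    unfold vlab
    rw [vtx_pivot0 s hb j]
  rw [this]

lemma doorAt_pivotLast {lab : Pt (n+1) → Fin (n+2)} (s : Simp (n+1) N)
    (hb : 1 ≤ (s.1 (s.2 (Fin.last n)) : ℕ)) :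
    DoorAt lab (pivotLast s) 0 ↔ DoorAt lab s (Fin.last (n+1)) := by
  unfold DoorAt
  rw [erase_last_eq_image, erase_zero_eq_image, Finset.image_image, Finset.image_image]
  have : (vlab lab (pivotLast s)) ∘ Fin.succ = (vlab lab s) ∘ Fin.castSucc := by
    funext j
    simp only [Function.comp_apply]
    unfold vlab
    rw [vtx_pivotLast s hb j]
  rw [this]

-- even cardinality via involution
lemma even_card_of_invol {α : Type*} [DecidableEq α] (f : α → α) :
    ∀ (s : Finset α), (∀ x ∈ s, f x ∈ s) → (∀ x ∈ s, f (f x) = x) →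
      (∀ x ∈ s, f x ≠ x) → Even s.card := by
  intro s
  induction s using Finset.strongInduction with
  | _ s ih =>
    rcases s.eq_empty_or_nonempty with rfl | ⟨a, ha⟩
    · intro _ _ _; simp
    · intro h1 h2 h3
      set t := (s.erase a).erase (f a) with ht
      have hfa : f a ∈ s := h1 a ha
      have hfa' : f a ≠ a := h3 a ha
      have htcard : t.card + 2 = s.card := by
        rw [ht, Finset.card_erase_of_mem (Finset.mem_erase.2 ⟨hfa', hfa⟩),
          Finset.card_erase_of_mem ha]
        have h4 : 1 ≤ s.card := Finset.card_pos.2 ⟨a, ha⟩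
        have h5 : 2 ≤ s.card := by
          rcases Finset.one_lt_card.2 ⟨a, ha, f a, hfa, fun hc => hfa' hc.symm⟩ with h
          omega
        omega
      have hsub : t ⊂ s := by
        apply Finset.ssubset_of_subset_of_ssubset (Finset.erase_subset _ _)
        exact Finset.erase_ssubset ha
      have hmem : ∀ x ∈ t, x ∈ s := by
        intro x hx
        exact Finset.mem_of_mem_erase (Finset.mem_of_mem_erase hx)
      have ht1 : ∀ x ∈ t, f x ∈ t := by
        intro x hx
        have hxs := hmem x hx
        have hx1 : x ≠ f a := (Finset.mem_erase.1 hx).1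
        have hx2 : x ≠ a := (Finset.mem_erase.1 (Finset.mem_of_mem_erase hx)).1
        refine Finset.mem_erase.2 ⟨?_, Finset.mem_erase.2 ⟨?_, h1 x hxs⟩⟩
        · intro hc
          exact hx2 (by rw [← h2 x hxs, hc, h2 a ha])
        · intro hc
          exact hx1 (by rw [← hc, h2 x hxs])
      obtain ⟨c, hc⟩ := ih t hsub ht1 (fun x hx => h2 x (hmem x hx)) (fun x hx => h3 x (hmem x hx))
      exact ⟨c + 1, by omega⟩


theorem doors_parity (f : Fin (n+1) → Fin (n+1)) :
    (((univ.filter (fun i : Fin (n+1) =>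
        image f (univ.erase i) = univ.erase (Fin.last n))).card : ZMod 2))
      = (if image f univ = univ then 1 else 0) := by
  classical
  by_cases hinj : Function.Injective f
  · -- injective case: bijective, exactly one door index
    have hsurj : Function.Surjective f := Finite.surjective_of_injective hinj
    have himg : image f univ = univ := Finset.image_univ_of_surjective hsurj
    obtain ⟨i₀, hi₀⟩ := hsurj (Fin.last n)
    have : (univ.filter (fun i : Fin (n+1) =>
        image f (univ.erase i) = univ.erase (Fin.last n))) = {i₀} := by
      ext i
      simp only [mem_filter, mem_univ, true_and, mem_singleton]
      rw [Finset.image_erase hinj, himg]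
      constructor
      · intro h
        have hlast : Fin.last n ∉ univ.erase (f i) := by
          rw [h]; exact Finset.notMem_erase _ _
        have hfi : f i = Fin.last n := by
          by_contra hne'
          exact hlast (Finset.mem_erase.2 ⟨Ne.symm hne', mem_univ _⟩)
        exact hinj (hfi.trans hi₀.symm)
      · rintro rfl; rw [hi₀]
    rw [this, himg]
    simp
  · -- non-injective case
    obtain ⟨i, j, hfij, hij⟩ : ∃ i j, f i = f j ∧ i ≠ j := by
      simp only [Function.Injective, not_forall] at hinj
      obtain ⟨i, j, h1, h2⟩ := hinj
      exact ⟨i, j, h1, h2⟩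
    have himg : ¬ (image f univ = univ) := by
      intro h
      have hcard : (image f univ).card = (univ : Finset (Fin (n+1))).card := by rw [h]
      have := Finset.injOn_of_card_image_eq hcard
      exact hij (this (mem_coe.2 (mem_univ i)) (mem_coe.2 (mem_univ j)) hfij)
    rw [if_neg himg]
    -- the filter is a subset of {i, j}, and contains i iff it contains j
    set P : Fin (n+1) → Prop := fun i =>
        image f (univ.erase i) = univ.erase (Fin.last n) with hP
    have hsub : (univ.filter P) ⊆ {i, j} := by
      intro x hx
      simp only [mem_filter, mem_univ, true_and] at hx
      by_contra hx2
      simp only [mem_insert, mem_singleton, not_or] at hx2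
      have hcard : (image f (univ.erase x)).card = (univ.erase x).card := by
        rw [hx]
        simp [Finset.card_erase_of_mem]
      have hinjOn := Finset.injOn_of_card_image_eq hcard
      have hi' : i ∈ (univ.erase x : Finset (Fin (n+1))) :=
        Finset.mem_erase.2 ⟨fun h => hx2.1 h.symm, mem_univ _⟩
      have hj' : j ∈ (univ.erase x : Finset (Fin (n+1))) :=
        Finset.mem_erase.2 ⟨fun h => hx2.2 h.symm, mem_univ _⟩
      exact hij (hinjOn hi' hj' hfij)
    have hiff : P i ↔ P j := by
      have himeq : image f (univ.erase i) = image f (univ.erase j) := by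
        ext y
        simp only [Finset.mem_image, Finset.mem_erase, mem_univ, and_true]
        constructor
        · rintro ⟨z, hz, rfl⟩
          by_cases hzj : z = j
          · exact ⟨i, hij, by rw [hzj, ← hfij]⟩
          · exact ⟨z, hzj, rfl⟩
        · rintro ⟨z, hz, rfl⟩
          by_cases hzi : z = i
          · exact ⟨j, hij.symm, by rw [hzi, hfij]⟩
          · exact ⟨z, hzi, rfl⟩
      change (image f (univ.erase i) = _) ↔ (image f (univ.erase j) = _)
      rw [himeq]
    have : (univ.filter P).card = 0 ∨ (univ.filter P).card = 2 := by
      by_cases hPi : P i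
      · right
        have : (univ.filter P) = {i, j} := by
          apply Finset.Subset.antisymm hsub
          intro x hx
          simp only [mem_insert, mem_singleton] at hx
          rcases hx with rfl | rfl
          · exact mem_filter.2 ⟨mem_univ _, hPi⟩
          · exact mem_filter.2 ⟨mem_univ _, hiff.1 hPi⟩
        rw [this, Finset.card_insert_of_notMem (by simpa using hij), Finset.card_singleton]
      · left
        rw [Finset.card_eq_zero]
        apply Finset.eq_empty_of_forall_notMem
        intro x hx
        have hx' := hsub hx
        simp only [mem_insert, mem_singleton] at hx'
        have := (mem_filter.1 hx).2
        rcases hx' with rfl | rfl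
        · exact hPi this
        · exact hPi (hiff.2 this)
    rcases this with h | h <;> rw [h]
    · simp
    · decide

-- ### the counting argument

/-- all doors (simplex, omitted index) -/
def doorSet (n N : ℕ) (lab : Pt n → Fin (n+1)) :
    Finset (Simp n N × Fin (n+1)) :=
  univ.filter (fun si => DoorAt lab si.1 si.2)

lemma fullCount_eq_doorCount (n N : ℕ) (lab : Pt n → Fin (n+1)) :
    ((fullCount n N lab : ZMod 2)) = ((doorSet n N lab).card : ZMod 2) := by
  have h1 : (doorSet n N lab).card
      = ∑ s : Simp n N, (univ.filter (fun i => DoorAt lab s i)).card := by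
    rw [doorSet,
      Finset.card_eq_sum_card_fiberwise (f := Prod.fst) (t := univ) (fun x _ => mem_univ _)]
    apply Finset.sum_congr rfl
    intro s _
    apply Finset.card_bij (fun (x : Simp n N × Fin (n+1)) _ => x.2)
    · intro x hx
      simp only [Finset.mem_filter, mem_univ, true_and] at hx ⊢
      rw [← hx.2]
      exact hx.1
    · intro x hx y hy hxy
      simp only [Finset.mem_filter, mem_univ, true_and] at hx hy
      apply Prod.ext
      · rw [hx.2, hy.2]
      · exact hxy
    · intro i hi
      simp only [Finset.mem_filter, mem_univ, true_and] at hi ⊢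
      exact ⟨(s, i), ⟨hi, rfl⟩, rfl⟩
  have h2 : ∀ s : Simp n N,
      (((univ.filter (fun i => DoorAt lab s i)).card : ZMod 2))
        = (if IsFull lab s then 1 else 0) := fun s => doors_parity (fun i => vlab lab s i)
  calc ((fullCount n N lab : ZMod 2))
      = ∑ s : Simp n N, (if IsFull lab s then (1 : ZMod 2) else 0) := by
        rw [fullCount, ← Finset.sum_boole]
    _ = ∑ s : Simp n N, (((univ.filter (fun i => DoorAt lab s i)).card : ZMod 2)) :=
        Finset.sum_congr rfl (fun s _ => (h2 s).symm)
    _ = ((doorSet n N lab).card : ZMod 2) := by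
        rw [h1]
        push_cast
        rfl

/-- the involution on doors -/
def iota (si : Simp (n+1) N × Fin (n+2)) : Simp (n+1) N × Fin (n+2) :=
  if h0 : si.2 = 0 then
    (if hb : (si.1.1 (si.1.2 0) : ℕ) + 1 < N then (pivot0 si.1 hb, Fin.last (n+1)) else si)
  else if si.2 = Fin.last (n+1) then (pivotLast si.1, 0)
  else (pivotMid si.1 si.2, si.2)

abbrev TopD (N : ℕ) (si : Simp (n+1) N × Fin (n+2)) : Prop :=
  si.2 = 0 ∧ (si.1.1 (si.1.2 0) : ℕ) + 1 = N

lemma doorCount_parity {lab : Pt (n+1) → Fin (n+2)} (hok : OKLab (n+1) N lab) :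
    (((doorSet (n+1) N lab).card : ZMod 2))
      = (((doorSet (n+1) N lab).filter (TopD N)).card : ZMod 2) := by
  classical
  set D := doorSet (n+1) N lab with hD
  have hsplit := Finset.card_filter_add_card_filter_not (s := D) (p := TopD N)
  have heven : Even ((D.filter (fun si => ¬ TopD N si)).card) := by
    apply even_card_of_invol iota
    · -- maps into itself
      intro x hx
      obtain ⟨hxD, hxT⟩ := Finset.mem_filter.1 hx
      rw [hD, doorSet, Finset.mem_filter] at hxD
      have hdoor := hxD.2
      by_cases h0 : x.2 = 0
      · have hblt : (x.1.1 (x.1.2 0) : ℕ) + 1 < N := by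
          have := (x.1.1 (x.1.2 0)).isLt
          have hne : ¬ ((x.1.1 (x.1.2 0) : ℕ) + 1 = N) := fun hc => hxT ⟨h0, hc⟩
          omega
        have hx' : iota x = (pivot0 x.1 hblt, Fin.last (n+1)) := by
          rw [iota, dif_pos h0, dif_pos hblt]
        rw [hx']
        refine Finset.mem_filter.2 ⟨?_, ?_⟩
        · rw [hD, doorSet, Finset.mem_filter]
          refine ⟨mem_univ _, ?_⟩
          rw [h0] at hdoor
          exact (doorAt_pivot0 x.1 hblt).2 hdoor
        · intro hT
          have := hT.1
          simp only [Fin.ext_iff, Fin.val_last, Fin.val_zero] at this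
          omega
      · by_cases hl : x.2 = Fin.last (n+1)
        · have hpos : 1 ≤ (x.1.1 (x.1.2 (Fin.last n)) : ℕ) := by
            apply door_last_pos hok
            rw [← hl]; exact hdoor
          have hx' : iota x = (pivotLast x.1, 0) := by
            rw [iota, dif_neg h0, if_pos hl]
          rw [hx']
          refine Finset.mem_filter.2 ⟨?_, ?_⟩
          · rw [hD, doorSet, Finset.mem_filter]
            refine ⟨mem_univ _, ?_⟩
            rw [hl] at hdoor
            exact (doorAt_pivotLast x.1 hpos).2 hdoor
          · intro hT
            have h2 := hT.2
            have h3 : (pivotLast x.1).2 0 = x.1.2 (Fin.last n) := pivotLast_perm_zero x.1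
            rw [h3, pivotLast_base_val, if_pos rfl] at h2
            have := (x.1.1 (x.1.2 (Fin.last n))).isLt
            omega
        · have hx' : iota x = (pivotMid x.1 x.2, x.2) := by
            rw [iota, dif_neg h0, if_neg hl]
          rw [hx']
          refine Finset.mem_filter.2 ⟨?_, fun hT => h0 hT.1⟩
          rw [hD, doorSet, Finset.mem_filter]
          exact ⟨mem_univ _, (doorAt_pivotMid x.1 x.2 h0 hl).2 hdoor⟩
    · -- involutive
      intro x hx
      obtain ⟨hxD, hxT⟩ := Finset.mem_filter.1 hx
      rw [hD, doorSet, Finset.mem_filter] at hxD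
      have hdoor := hxD.2
      by_cases h0 : x.2 = 0
      · have hblt : (x.1.1 (x.1.2 0) : ℕ) + 1 < N := by
          have := (x.1.1 (x.1.2 0)).isLt
          have hne : ¬ ((x.1.1 (x.1.2 0) : ℕ) + 1 = N) := fun hc => hxT ⟨h0, hc⟩
          omega
        have hx' : iota x = (pivot0 x.1 hblt, Fin.last (n+1)) := by
          rw [iota, dif_pos h0, dif_pos hblt]
        rw [hx', iota]
        rw [dif_neg (by simp [Fin.ext_iff]), if_pos rfl, pivotLast_pivot0]
        rw [← h0]
      · by_cases hl : x.2 = Fin.last (n+1)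
        · have hpos : 1 ≤ (x.1.1 (x.1.2 (Fin.last n)) : ℕ) := by
            apply door_last_pos hok
            rw [← hl]; exact hdoor
          have hx' : iota x = (pivotLast x.1, 0) := by
            rw [iota, dif_neg h0, if_pos hl]
          rw [hx', iota]
          have hb' : ((pivotLast x.1).1 ((pivotLast x.1).2 0) : ℕ) + 1 < N := by
            rw [pivotLast_perm_zero, pivotLast_base_val, if_pos rfl]
            have := (x.1.1 (x.1.2 (Fin.last n))).isLt
            omega
          rw [dif_pos rfl, dif_pos hb', pivot0_pivotLast x.1 hpos hb']
          rw [← hl]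
        · have hx' : iota x = (pivotMid x.1 x.2, x.2) := by
            rw [iota, dif_neg h0, if_neg hl]
          rw [hx', iota, dif_neg h0, if_neg hl, pivotMid_pivotMid]
    · -- no fixed point
      intro x hx
      obtain ⟨hxD, hxT⟩ := Finset.mem_filter.1 hx
      rw [hD, doorSet, Finset.mem_filter] at hxD
      have hdoor := hxD.2
      by_cases h0 : x.2 = 0
      · have hblt : (x.1.1 (x.1.2 0) : ℕ) + 1 < N := by
          have := (x.1.1 (x.1.2 0)).isLt
          have hne : ¬ ((x.1.1 (x.1.2 0) : ℕ) + 1 = N) := fun hc => hxT ⟨h0, hc⟩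
          omega
        have hx' : iota x = (pivot0 x.1 hblt, Fin.last (n+1)) := by
          rw [iota, dif_pos h0, dif_pos hblt]
        rw [hx']
        intro hc
        have := congrArg Prod.snd hc
        simp only at this
        rw [h0] at this
        simp [Fin.ext_iff] at this
      · by_cases hl : x.2 = Fin.last (n+1)
        · have hx' : iota x = (pivotLast x.1, 0) := by
            rw [iota, dif_neg h0, if_pos hl]
          rw [hx']
          intro hc
          have := congrArg Prod.snd hc
          simp only at this
          exact h0 this.symm
        · have hx' : iota x = (pivotMid x.1 x.2, x.2) := by
            rw [iota, dif_neg h0, if_neg hl]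
          rw [hx']
          intro hc
          exact pivotMid_ne x.1 x.2 h0 hl (congrArg Prod.fst hc)
  obtain ⟨c, hc⟩ := heven
  have hsplit' : (D.filter (TopD N)).card + (D.filter (fun si => ¬ TopD N si)).card = D.card :=
    hsplit
  have hDc : D.card = (D.filter (TopD N)).card + 2 * c := by omega
  rw [hDc, Nat.cast_add, Nat.cast_mul]
  have h2 : ((2:ℕ) : ZMod 2) = 0 := by decide
  rw [h2, zero_mul, add_zero]

-- ### dimension reduction

def labDown (N : ℕ) (lab : Pt (n+1) → Fin (n+2)) : Pt n → Fin (n+1) :=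
  fun v => ⟨min ((lab (Fin.snoc v N) : ℕ)) n, by omega⟩

lemma snoc_le {v : Pt n} (hv : ∀ j, v j ≤ N) : ∀ j, (Fin.snoc v N : Pt (n+1)) j ≤ N := by
  intro j
  induction j using Fin.lastCases with
  | last => rw [Fin.snoc_last]
  | cast k => rw [Fin.snoc_castSucc]; exact hv k

lemma labDown_val {lab : Pt (n+1) → Fin (n+2)} (hok : OKLab (n+1) N lab)
    {v : Pt n} (hv : ∀ j, v j ≤ N) :
    ((labDown N lab v : ℕ)) = ((lab (Fin.snoc v N) : ℕ)) := by
  have h1 : ((lab (Fin.snoc v N) : ℕ)) ≤ n := by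
    have := hok.top (Fin.snoc v N) (snoc_le hv) (Fin.last n) (by rw [Fin.snoc_last])
    simpa using this
  simp only [labDown]
  omega

lemma labDown_castSucc {lab : Pt (n+1) → Fin (n+2)} (hok : OKLab (n+1) N lab)
    {v : Pt n} (hv : ∀ j, v j ≤ N) :
    Fin.castSucc (labDown N lab v) = lab (Fin.snoc v N) := by
  apply Fin.ext
  rw [Fin.coe_castSucc, labDown_val hok hv]

lemma okLab_down {lab : Pt (n+1) → Fin (n+2)} (hok : OKLab (n+1) N lab) :
    OKLab n N (labDown N lab) := by
  constructor
  · intro v hv k hk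
    intro hc
    have hval : ((labDown N lab v : ℕ)) = (k : ℕ) := by rw [hc]; rfl
    rw [labDown_val hok hv] at hval
    apply hok.bot (Fin.snoc v N) (snoc_le hv) (Fin.castSucc k)
      (by rw [Fin.snoc_castSucc]; exact hk)
    apply Fin.ext
    rw [hval]
    rfl
  · intro v hv k hk
    have := hok.top (Fin.snoc v N) (snoc_le hv) (Fin.castSucc k)
      (by rw [Fin.snoc_castSucc]; exact hk)
    rw [labDown_val hok hv]
    simpa using this

def pUp (hN : 1 ≤ N) (p' : Fin n → Fin N) : Fin (n+1) → Fin N :=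
  fun k => Fin.lastCases ⟨N-1, by omega⟩ (fun j => p' j) k

def permUp (π' : Equiv.Perm (Fin n)) : Equiv.Perm (Fin (n+1)) where
  toFun i := Fin.cases (Fin.last n) (fun j => (π' j).castSucc) i
  invFun k := Fin.lastCases 0 (fun k' => (π'.symm k').succ) k
  left_inv i := by
    induction i using Fin.cases with
    | zero => simp
    | succ j => simp
  right_inv k := by
    induction k using Fin.lastCases with
    | last => simp
    | cast k' => simp

def sUp (hN : 1 ≤ N) (s' : Simp n N) : Simp (n+1) N := (pUp hN s'.1, permUp s'.2)

lemma permUp_zero (π' : Equiv.Perm (Fin n)) : permUp π' 0 = Fin.last n := by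
  simp [permUp]

lemma permUp_succ (π' : Equiv.Perm (Fin n)) (j : Fin n) :
    permUp π' j.succ = (π' j).castSucc := by
  simp [permUp]

lemma permUp_symm_last (π' : Equiv.Perm (Fin n)) : (permUp π').symm (Fin.last n) = 0 := by
  rw [Equiv.symm_apply_eq, permUp_zero]

lemma permUp_symm_castSucc (π' : Equiv.Perm (Fin n)) (k : Fin n) :
    (permUp π').symm k.castSucc = (π'.symm k).succ := by
  rw [Equiv.symm_apply_eq, permUp_succ, Equiv.apply_symm_apply]

lemma vtx_sUp (hN : 1 ≤ N) (s' : Simp n N) (j : Fin (n+1)) :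
    vtx (sUp hN s') j.succ = Fin.snoc (vtx s' j) N := by
  funext k
  induction k using Fin.lastCases with
  | last =>
    rw [Fin.snoc_last]
    show ((pUp hN s'.1 (Fin.last n)) : ℕ) + _ = N
    have h1 : (permUp s'.2).symm (Fin.last n) = 0 := permUp_symm_last s'.2
    show ((pUp hN s'.1 (Fin.last n)) : ℕ)
      + (if (((sUp hN s').2.symm (Fin.last n) : ℕ) < ((j.succ : Fin (n+2)) : ℕ)) then 1 else 0) = N
    have h2 : ((sUp hN s').2.symm (Fin.last n)) = 0 := h1
    rw [h2]
    have h3 : ((pUp hN s'.1 (Fin.last n)) : ℕ) = N - 1 := by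
      simp [pUp]
    rw [h3, if_pos]
    · omega
    · simp [Fin.val_succ]
  | cast k' =>
    rw [Fin.snoc_castSucc]
    show ((pUp hN s'.1 k'.castSucc) : ℕ)
      + (if (((sUp hN s').2.symm k'.castSucc : ℕ) < ((j.succ : Fin (n+2)) : ℕ)) then 1 else 0)
      = vtx s' j k'
    have h1 : ((sUp hN s').2.symm k'.castSucc) = (s'.2.symm k').succ := permUp_symm_castSucc s'.2 k'
    have h2 : ((pUp hN s'.1 k'.castSucc) : ℕ) = (s'.1 k' : ℕ) := by
      simp [pUp]
    rw [h1, h2]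
    show _ = (s'.1 k' : ℕ) + _
    congr 1
    simp only [Fin.val_succ]
    rcases Nat.lt_or_ge ((s'.2.symm k' : ℕ)) ((j : ℕ)) with hc | hc
    · rw [if_pos (by omega), if_pos (by omega)]
    · rw [if_neg (by omega), if_neg (by omega)]

lemma vlab_sUp {lab : Pt (n+1) → Fin (n+2)} (hok : OKLab (n+1) N lab) (hN : 1 ≤ N)
    (s' : Simp n N) (j : Fin (n+1)) :
    vlab lab (sUp hN s') j.succ = Fin.castSucc (vlab (labDown N lab) s' j) := by
  unfold vlab
  rw [vtx_sUp hN s' j, ← labDown_castSucc hok (vtx_le s' j)]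

lemma door_sUp_iff {lab : Pt (n+1) → Fin (n+2)} (hok : OKLab (n+1) N lab) (hN : 1 ≤ N)
    (s' : Simp n N) :
    DoorAt lab (sUp hN s') 0 ↔ IsFull (labDown N lab) s' := by
  unfold DoorAt IsFull
  rw [erase_zero_eq_image, erase_last_eq_image, Finset.image_image]
  have h1 : (vlab lab (sUp hN s')) ∘ Fin.succ
      = Fin.castSucc ∘ (vlab (labDown N lab) s') := by
    funext j
    simp only [Function.comp_apply]
    exact vlab_sUp hok hN s' j
  rw [h1, ← Finset.image_image]
  constructor
  · intro h
    exact Finset.image_injective (Fin.castSucc_injective (n+1)) h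
  · intro h
    rw [h]

def restrictPerm (π : Equiv.Perm (Fin (n+1))) (h : π 0 = Fin.last n) : Equiv.Perm (Fin n) where
  toFun j := (π j.succ).castPred (by
    intro hc
    have : π j.succ = π 0 := by rw [hc, h]
    exact (Fin.succ_ne_zero j) (π.injective this))
  invFun k := (π.symm k.castSucc).pred (by
    intro hc
    have : k.castSucc = π 0 := by rw [← hc, Equiv.apply_symm_apply]
    rw [h] at this
    exact absurd this (Fin.castSucc_lt_last k).ne)
  left_inv j := by
    apply Fin.succ_injective
    rw [Fin.succ_pred]
    rw [Fin.castSucc_castPred, Equiv.symm_apply_apply]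
  right_inv k := by
    apply Fin.castSucc_injective
    rw [Fin.castSucc_castPred]
    rw [Fin.succ_pred, Equiv.apply_symm_apply]

def sDown (s : Simp (n+1) N) (h : s.2 0 = Fin.last n) : Simp n N :=
  (fun j => s.1 j.castSucc, restrictPerm s.2 h)

lemma sUp_sDown (hN : 1 ≤ N) (s : Simp (n+1) N) (h : s.2 0 = Fin.last n)
    (htop : (s.1 (s.2 0) : ℕ) + 1 = N) :
    sUp hN (sDown s h) = s := by
  unfold sUp sDown
  ext1
  · funext k
    induction k using Fin.lastCases with
    | last =>
      apply Fin.ext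
      show ((pUp hN (fun j => s.1 j.castSucc) (Fin.last n)) : ℕ) = _
      have h1 : ((pUp hN (fun j => s.1 j.castSucc) (Fin.last n)) : ℕ) = N - 1 := by
        simp [pUp]
      rw [h1]
      rw [h] at htop
      omega
    | cast k' =>
      show pUp hN (fun j => s.1 j.castSucc) k'.castSucc = s.1 k'.castSucc
      simp [pUp]
  · show permUp (restrictPerm s.2 h) = s.2
    apply Equiv.ext
    intro i
    induction i using Fin.cases with
    | zero => rw [permUp_zero, h]
    | succ j =>
      rw [permUp_succ]
      show ((restrictPerm s.2 h) j).castSucc = s.2 j.succ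
      unfold restrictPerm
      simp only [Equiv.coe_fn_mk]
      rw [Fin.castSucc_castPred]

lemma sDown_sUp (hN : 1 ≤ N) (s' : Simp n N) (h : (sUp hN s').2 0 = Fin.last n) :
    sDown (sUp hN s') h = s' := by
  unfold sDown
  ext1
  · funext j
    show pUp hN s'.1 j.castSucc = s'.1 j
    simp [pUp]
  · show restrictPerm (permUp s'.2) h = s'.2
    apply Equiv.ext
    intro j
    apply Fin.castSucc_injective
    show ((restrictPerm (permUp s'.2) h) j).castSucc = _
    unfold restrictPerm
    simp only [Equiv.coe_fn_mk]
    rw [Fin.castSucc_castPred, permUp_succ]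

lemma top_mem_char {lab : Pt (n+1) → Fin (n+2)} (hok : OKLab (n+1) N lab)
    {si : Simp (n+1) N × Fin (n+2)} (hsi : si ∈ (doorSet (n+1) N lab).filter (TopD N)) :
    si.1.2 0 = Fin.last n := by
  have h1 := Finset.mem_filter.1 hsi
  have hdoor : DoorAt lab si.1 si.2 := (Finset.mem_filter.1 h1.1).2
  have hT := h1.2
  rw [hT.1] at hdoor
  exact door_top_char hok hdoor hT.2

lemma topCount_eq {lab : Pt (n+1) → Fin (n+2)} (hok : OKLab (n+1) N lab) (hN : 1 ≤ N) :
    fullCount n N (labDown N lab) = ((doorSet (n+1) N lab).filter (TopD N)).card := by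
  unfold fullCount
  refine Finset.card_bij'
    (fun s' _ => ((sUp hN s', 0) : Simp (n+1) N × Fin (n+2)))
    (fun a ha => sDown a.1 (top_mem_char hok ha)) ?_ ?_ ?_ ?_
  · -- hi : image of i lands in top doors
    intro b hb
    simp only [Finset.mem_filter, mem_univ, true_and] at hb
    refine Finset.mem_filter.2 ⟨?_, ?_, ?_⟩
    · rw [doorSet, Finset.mem_filter]
      exact ⟨mem_univ _, (door_sUp_iff hok hN b).2 hb⟩
    · rfl
    · show ((sUp hN b).1 ((sUp hN b).2 0) : ℕ) + 1 = N
      rw [show (sUp hN b).2 0 = Fin.last n from permUp_zero b.2]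
      show ((pUp hN b.1 (Fin.last n)) : ℕ) + 1 = N
      have : ((pUp hN b.1 (Fin.last n)) : ℕ) = N - 1 := by simp [pUp]
      omega
  · -- hj : sDown lands in full simplices
    intro a ha
    simp only [Finset.mem_filter, mem_univ, true_and]
    have h1 := Finset.mem_filter.1 ha
    have hdoor : DoorAt lab a.1 a.2 := (Finset.mem_filter.1 h1.1).2
    have hT := h1.2
    rw [hT.1] at hdoor
    rw [← door_sUp_iff hok hN]
    rw [sUp_sDown hN a.1 (top_mem_char hok ha) hT.2]
    exact hdoor
  · -- left inverse : sDown (sUp b, 0) = b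
    intro b hb
    apply sDown_sUp
  · -- right inverse : (sUp (sDown a), 0) = a
    intro a ha
    have h1 := Finset.mem_filter.1 ha
    have hT := h1.2
    apply Prod.ext
    · show sUp hN (sDown a.1 _) = a.1
      apply sUp_sDown
      exact hT.2
    · exact hT.1.symm

theorem step_parity {lab : Pt (n+1) → Fin (n+2)} (hok : OKLab (n+1) N lab) (hN : 1 ≤ N) :
    ((fullCount (n+1) N lab : ZMod 2)) = ((fullCount n N (labDown N lab) : ZMod 2)) := by
  rw [fullCount_eq_doorCount, doorCount_parity hok, ← topCount_eq hok hN]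

theorem sperner_parity : ∀ n, ∀ N, 1 ≤ N → ∀ lab : Pt n → Fin (n+1), OKLab n N lab →
    ((fullCount n N lab : ZMod 2)) = 1 := by
  intro n
  induction n with
  | zero =>
    intro N hN lab _
    have h1 : ∀ s : Simp 0 N, IsFull lab s := by
      intro s
      unfold IsFull
      apply Finset.eq_univ_of_forall
      intro x
      rw [Finset.mem_image]
      exact ⟨0, mem_univ _, by apply Fin.ext; omega⟩
    unfold fullCount
    rw [Finset.filter_true_of_mem (fun s _ => h1 s)]
    rw [Finset.card_univ]
    simp
  | succ n ih =>
    intro N hN lab hok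
    rw [step_parity hok hN]
    exact ih N hN (labDown N lab) (okLab_down hok)

theorem exists_full (n N : ℕ) (hN : 1 ≤ N) (lab : Pt n → Fin (n+1)) (hok : OKLab n N lab) :
    ∃ s : Simp n N, IsFull lab s := by
  by_contra hc
  push_neg at hc
  have h0 : fullCount n N lab = 0 := by
    unfold fullCount
    rw [Finset.card_eq_zero]
    apply Finset.eq_empty_of_forall_notMem
    intro s hs
    exact hc s (Finset.mem_filter.1 hs).2
  have := sperner_parity n N hN lab hok
  rw [h0] at this
  simp at this

-- ### analytic part

section Analytic

open Filter Topology

variable {m : ℕ} {a b : Fin m → ℝ} {F : (Fin m → ℝ) → (Fin m → ℝ)}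

/-- coordinatewise monotonicity on the box -/
lemma mono_box
    (hmono : ∀ (k i : Fin m), ∀ x ∈ Set.Icc a b, ∀ s t : ℝ,
      a i ≤ s → s ≤ t → t ≤ b i →
      F (Function.update x i s) k ≤ F (Function.update x i t) k)
    (k : Fin m) {x y : Fin m → ℝ} (hx : x ∈ Set.Icc a b) (hy : y ∈ Set.Icc a b)
    (hxy : x ≤ y) : F x k ≤ F y k := by
  classical
  set z : ℕ → (Fin m → ℝ) := fun j i => if (i:ℕ) < j then y i else x i with hz
  have hz0 : z 0 = x := by funext i; simp [hz]
  have hzm : z m = y := by funext i; simp [hz, i.isLt]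
  have hzmem : ∀ j, z j ∈ Set.Icc a b := by
    intro j
    constructor
    · intro i
      simp only [hz]
      split
      · exact hy.1 i
      · exact hx.1 i
    · intro i
      simp only [hz]
      split
      · exact hy.2 i
      · exact hx.2 i
  have hstep : ∀ j, j < m → F (z j) k ≤ F (z (j+1)) k := by
    intro j hj
    have h1 : z j = Function.update (z j) ⟨j, hj⟩ (x ⟨j, hj⟩) := by
      funext i
      rw [Function.update_apply]
      split
      · rename_i h; rw [h]; simp [hz]
      · rfl
    have h2 : z (j+1) = Function.update (z j) ⟨j, hj⟩ (y ⟨j, hj⟩) := by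
      funext i
      rw [Function.update_apply]
      split
      · rename_i h; rw [h]; simp [hz]
      · rename_i h
        have hne : (i:ℕ) ≠ j := fun hc => h (Fin.ext hc)
        simp only [hz]
        by_cases hlt : (i:ℕ) < j
        · rw [if_pos hlt, if_pos (by omega)]
        · rw [if_neg hlt, if_neg (by omega)]
    calc F (z j) k = F (Function.update (z j) ⟨j, hj⟩ (x ⟨j, hj⟩)) k := by rw [← h1]
      _ ≤ F (Function.update (z j) ⟨j, hj⟩ (y ⟨j, hj⟩)) k :=
          hmono k ⟨j, hj⟩ (z j) (hzmem j) _ _ (hx.1 ⟨j, hj⟩) (hxy ⟨j, hj⟩) (hy.2 ⟨j, hj⟩)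
      _ = F (z (j+1)) k := by rw [← h2]
  have hchain : ∀ j, j ≤ m → F (z 0) k ≤ F (z j) k := by
    intro j
    induction j with
    | zero => intro _; exact le_rfl
    | succ j ih =>
      intro hj
      exact le_trans (ih (by omega)) (hstep j (by omega))
  have := hchain m le_rfl
  rw [hz0, hzm] at this
  exact this

end Analytic

lemma vtx_bounds (s : Simp n N) (i : Fin (n+1)) (j : Fin n) :
    (s.1 j : ℕ) ≤ vtx s i j ∧ vtx s i j ≤ (s.1 j : ℕ) + 1 := by
  unfold vtx
  split <;> omega

end PM


open Filter Topology PM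

/-- Lemma 3.5 of [HKP97]: multi-dimensional intermediate value theorem for
continuous maps `F : ∏ₖ [aₖ,bₖ] → ℝ^m` whose components are monotonically increasing in
each argument. -/
theorem multidim_intermediate_value
    (m : ℕ) (a b : Fin m → ℝ) (hab : ∀ k, a k < b k)
    (F : (Fin m → ℝ) → (Fin m → ℝ))
    (hcont : ContinuousOn F (Set.Icc a b))
    (hmono : ∀ (k i : Fin m), ∀ x ∈ Set.Icc a b, ∀ s t : ℝ,
      a i ≤ s → s ≤ t → t ≤ b i →
      F (Function.update x i s) k ≤ F (Function.update x i t) k)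
    (hlt : ∀ k, F (Function.update b k (a k)) k < F (Function.update a k (b k)) k) :
    ∀ Fstar : Fin m → ℝ,
      (∀ k, Fstar k ∈
        Set.Icc (F (Function.update b k (a k)) k) (F (Function.update a k (b k)) k)) →
      ∃ x ∈ Set.Icc a b, F x = Fstar := by
  classical
  intro Fstar hFs
  have hab' : a ≤ b := fun k => (hab k).le
  set Fm : Fin m → ℝ := fun k => F (Function.update b k (a k)) k with hFmdef
  set Fp : Fin m → ℝ := fun k => F (Function.update a k (b k)) k with hFpdef
  have hupdb : ∀ k, Function.update b k (a k) ∈ Set.Icc a b := by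
    intro k
    constructor <;> intro i <;> rw [Function.update_apply] <;> split
    · rename_i h; rw [h]
    · exact hab' i
    · rename_i h; rw [h]; exact hab' k
    · exact le_rfl
  have hupda : ∀ k, Function.update a k (b k) ∈ Set.Icc a b := by
    intro k
    constructor <;> intro i <;> rw [Function.update_apply] <;> split
    · rename_i h; rw [h]; exact hab' k
    · exact le_rfl
    · rename_i h; rw [h]
    · exact hab' i
  have hlow : ∀ k, ∀ x ∈ Set.Icc a b, x k = a k → F x k ≤ Fm k := by
    intro k x hx hxk
    apply mono_box hmono k hx (hupdb k)
    intro i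
    rw [Function.update_apply]
    split
    · rename_i h; exact le_of_eq (by rw [h, hxk])
    · exact hx.2 i
  have hhigh : ∀ k, ∀ x ∈ Set.Icc a b, x k = b k → Fp k ≤ F x k := by
    intro k x hx hxk
    apply mono_box hmono k (hupda k) hx
    intro i
    rw [Function.update_apply]
    split
    · rename_i h; exact le_of_eq (by rw [h, hxk])
    · exact hx.1 i
  set δ : Fin m → ℝ := fun k => Fp k - Fm k with hδdef
  have hδ : ∀ k, 0 < δ k := fun k => sub_pos.2 (hlt k)
  set ε : ℕ → Fin m → ℝ := fun q k => δ k / ((q:ℝ) + 2) with hεdef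
  have hε_pos : ∀ q k, 0 < ε q k := by
    intro q k
    apply div_pos (hδ k)
    positivity
  have hε_le : ∀ q k, ε q k ≤ δ k / 2 := by
    intro q k
    apply div_le_div_of_nonneg_left (hδ k).le (by norm_num)
    · push_cast; linarith [Nat.cast_nonneg (α := ℝ) q]
  set c : ℕ → Fin m → ℝ := fun q k => max (Fm k + ε q k) (min (Fstar k) (Fp k - ε q k))
    with hcdef
  have hcFm : ∀ q k, Fm k < c q k := by
    intro q k
    have h1 : Fm k < Fm k + ε q k := by linarith [hε_pos q k]
    exact lt_of_lt_of_le h1 (le_max_left _ _)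
  have hcFp : ∀ q k, c q k < Fp k := by
    intro q k
    apply max_lt
    · have := hε_le q k; have := hδ k
      simp only [hδdef] at *
      linarith
    · have := hε_pos q k
      calc min (Fstar k) (Fp k - ε q k) ≤ Fp k - ε q k := min_le_right _ _
        _ < Fp k := by linarith
  have hc_lo : ∀ q k, Fstar k - ε q k ≤ c q k := by
    intro q k
    refine le_trans (le_min ?_ ?_) (le_max_right _ _)
    · linarith [hε_pos q k]
    · have := (hFs k).2
      change Fstar k ≤ Fp k at this
      linarith
  have hc_hi : ∀ q k, c q k ≤ Fstar k + ε q k := by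
    intro q k
    apply max_le
    · have := (hFs k).1
      change Fm k ≤ Fstar k at this
      linarith
    · calc min (Fstar k) (Fp k - ε q k) ≤ Fstar k := min_le_left _ _
        _ ≤ Fstar k + ε q k := by linarith [hε_pos q k]
  -- grid embedding
  set emb : ℕ → Pt m → (Fin m → ℝ) :=
    fun q v k => a k + (v k : ℝ) * (b k - a k) / ((q:ℝ) + 1) with hembdef
  have hemb_mem : ∀ q (v : Pt m), (∀ j, v j ≤ q + 1) → emb q v ∈ Set.Icc a b := by
    intro q v hv
    constructor <;> intro i
    · have h1 : 0 ≤ (v i : ℝ) * (b i - a i) / ((q:ℝ) + 1) := by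
        apply div_nonneg _ (by positivity)
        apply mul_nonneg (Nat.cast_nonneg _)
        linarith [hab' i]
      simp only [hembdef]
      linarith
    · simp only [hembdef]
      have h1 : (v i : ℝ) ≤ (q:ℝ) + 1 := by exact_mod_cast hv i
      have h2 : (0:ℝ) < (q:ℝ) + 1 := by positivity
      have h3 : (v i : ℝ) * (b i - a i) / ((q:ℝ)+1) ≤ b i - a i := by
        rw [div_le_iff₀ h2]
        nlinarith [sub_nonneg.2 (hab' i), Nat.cast_nonneg (α := ℝ) (v i)]
      linarith
  have hemb_low : ∀ q (v : Pt m) k, v k = 0 → emb q v k = a k := by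
    intro q v k h
    simp [hembdef, h]
  have hemb_high : ∀ q (v : Pt m) k, v k = q + 1 → emb q v k = b k := by
    intro q v k h
    simp only [hembdef, h]
    have h2 : ((q:ℝ) + 1) ≠ 0 := by positivity
    push_cast
    field_simp
    ring
  -- labels
  set G : ℕ → Pt m → Fin m → ℝ := fun q v k => F (emb q v) k - c q k with hGdef
  set Sv : ℕ → Pt m → Finset (Fin m) :=
    fun q v => Finset.univ.filter (fun k => 0 ≤ G q v k) with hSvdef
  set lab : ℕ → Pt m → Fin (m+1) := fun q v =>
    if h : (Sv q v).Nonempty then (Fin.castSucc ((Sv q v).min' h)) else Fin.last m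
    with hlabdef
  have lab_last : ∀ q (v : Pt m), lab q v = Fin.last m → ∀ k, G q v k < 0 := by
    intro q v h k
    by_contra hc
    push_neg at hc
    have hk : k ∈ Sv q v := by
      rw [hSvdef]
      exact Finset.mem_filter.2 ⟨Finset.mem_univ _, hc⟩
    have hne : (Sv q v).Nonempty := ⟨k, hk⟩
    rw [hlabdef] at h
    simp only [dif_pos hne] at h
    exact absurd h (Fin.castSucc_lt_last _).ne
  have lab_cast : ∀ q (v : Pt m) k, lab q v = Fin.castSucc k → 0 ≤ G q v k := by
    intro q v k h
    by_cases hne : (Sv q v).Nonempty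
    · rw [hlabdef] at h
      simp only [dif_pos hne] at h
      have h2 : (Sv q v).min' hne = k := Fin.castSucc_injective _ h
      have h3 := (Sv q v).min'_mem hne
      rw [h2, hSvdef] at h3
      exact (Finset.mem_filter.1 h3).2
    · rw [hlabdef] at h
      simp only [dif_neg hne] at h
      exact absurd h.symm (Fin.castSucc_lt_last _).ne
  have hok : ∀ q, OKLab m (q+1) (lab q) := by
    intro q
    constructor
    · intro v hv k hk
      intro hc
      have h0 := lab_cast q v k hc
      rw [hGdef] at h0
      simp only at h0
      have h1 : F (emb q v) k ≤ Fm k :=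
        hlow k (emb q v) (hemb_mem q v hv) (hemb_low q v k hk)
      have h2 := hcFm q k
      linarith
    · intro v hv k hk
      have h1 : Fp k ≤ F (emb q v) k :=
        hhigh k (emb q v) (hemb_mem q v hv) (hemb_high q v k hk)
      have h2 := hcFp q k
      have h3 : 0 ≤ G q v k := by rw [hGdef]; simp only; linarith
      have hkmem : k ∈ Sv q v := by
        rw [hSvdef]; exact Finset.mem_filter.2 ⟨Finset.mem_univ _, h3⟩
      have hne : (Sv q v).Nonempty := ⟨k, hkmem⟩
      rw [hlabdef]
      simp only [dif_pos hne, Fin.coe_castSucc]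
      exact Finset.min'_le _ _ hkmem
  -- full simplices for each grid size
  have hfull : ∀ q, ∃ s : Simp m (q+1), IsFull (lab q) s :=
    fun q => exists_full m (q+1) (by omega) (lab q) (hok q)
  choose sq hsq using hfull
  have hmem_img : ∀ q (cc : Fin (m+1)), ∃ i, vlab (lab q) (sq q) i = cc := by
    intro q cc
    have h1 : cc ∈ Finset.image (vlab (lab q) (sq q)) Finset.univ := by
      rw [hsq q]
      exact Finset.mem_univ _
    obtain ⟨i, _, hi⟩ := Finset.mem_image.1 h1
    exact ⟨i, hi⟩
  choose vidx hvidx using hmem_img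
  set u : ℕ → (Fin m → ℝ) := fun q => emb q (vtx (sq q) (vidx q (Fin.last m))) with hudef
  set w : ℕ → Fin m → (Fin m → ℝ) :=
    fun q k => emb q (vtx (sq q) (vidx q (Fin.castSucc k))) with hwdef
  have hu_mem : ∀ q, u q ∈ Set.Icc a b :=
    fun q => hemb_mem q _ (vtx_le _ _)
  have hw_mem : ∀ q k, w q k ∈ Set.Icc a b :=
    fun q k => hemb_mem q _ (vtx_le _ _)
  have hu_lt : ∀ q k, F (u q) k < c q k := by
    intro q k
    have h1 := lab_last q _ (hvidx q (Fin.last m)) k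
    rw [hGdef] at h1
    simp only at h1
    rw [hudef]
    simp only
    linarith
  have hw_ge : ∀ q k, c q k ≤ F (w q k) k := by
    intro q k
    have h1 := lab_cast q _ k (hvidx q (Fin.castSucc k))
    rw [hGdef] at h1
    simp only at h1
    rw [hwdef]
    simp only
    linarith
  -- mesh bound
  have hdist : ∀ q k j, |w q k j - u q j| ≤ (b j - a j) / ((q:ℝ) + 1) := by
    intro q k j
    have hb1 := vtx_bounds (sq q) (vidx q (Fin.castSucc k)) j
    have hb2 := vtx_bounds (sq q) (vidx q (Fin.last m)) j
    have hsub : w q k j - u q j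
        = (((vtx (sq q) (vidx q (Fin.castSucc k)) j : ℝ))
            - ((vtx (sq q) (vidx q (Fin.last m)) j : ℝ))) * ((b j - a j) / ((q:ℝ)+1)) := by
      rw [hwdef, hudef]
      simp only [hembdef]
      ring
    rw [hsub, abs_mul]
    have l1 : (((sq q).1 j : ℕ) : ℝ) ≤ ((vtx (sq q) (vidx q (Fin.castSucc k)) j : ℝ)) := by
      exact_mod_cast hb1.1
    have l2 : ((vtx (sq q) (vidx q (Fin.castSucc k)) j : ℝ)) ≤ (((sq q).1 j : ℕ) : ℝ) + 1 := by
      exact_mod_cast hb1.2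
    have l3 : (((sq q).1 j : ℕ) : ℝ) ≤ ((vtx (sq q) (vidx q (Fin.last m)) j : ℝ)) := by
      exact_mod_cast hb2.1
    have l4 : ((vtx (sq q) (vidx q (Fin.last m)) j : ℝ)) ≤ (((sq q).1 j : ℕ) : ℝ) + 1 := by
      exact_mod_cast hb2.2
    have h1 : |((vtx (sq q) (vidx q (Fin.castSucc k)) j : ℝ))
        - ((vtx (sq q) (vidx q (Fin.last m)) j : ℝ))| ≤ 1 :=
      abs_le.2 ⟨by linarith, by linarith⟩
    have hdnn : 0 ≤ (b j - a j) / ((q:ℝ)+1) :=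
      div_nonneg (sub_nonneg.2 (hab' j)) (by positivity)
    rw [abs_of_nonneg hdnn]
    calc _ ≤ 1 * ((b j - a j) / ((q:ℝ)+1)) := mul_le_mul_of_nonneg_right h1 hdnn
      _ = _ := one_mul _
  -- compactness
  obtain ⟨xh, hxhmem, φ, hφ, hconv⟩ :=
    (isCompact_Icc (a := a) (b := b)).tendsto_subseq hu_mem
  have hphi_ge : ∀ i, i ≤ φ i := fun i => hφ.le_apply
  have haux : ∀ C : ℝ, 0 ≤ C → Tendsto (fun i : ℕ => C / ((i:ℝ) + 1)) atTop (𝓝 0) := by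
    intro C hC
    apply Tendsto.div_atTop (tendsto_const_nhds)
    apply tendsto_atTop_add_const_right
    exact tendsto_natCast_atTop_atTop
  have hu_conv : ∀ j, Tendsto (fun i => u (φ i) j) atTop (𝓝 (xh j)) := by
    intro j
    exact tendsto_pi_nhds.1 hconv j
  have hw_conv : ∀ k, Tendsto (fun i => w (φ i) k) atTop (𝓝 xh) := by
    intro k
    rw [tendsto_pi_nhds]
    intro j
    have hdiff : Tendsto (fun i => w (φ i) k j - u (φ i) j) atTop (𝓝 0) := by
      rw [tendsto_zero_iff_abs_tendsto_zero]
      apply squeeze_zero (g := fun i : ℕ => (b j - a j) / ((i:ℝ)+1))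
        (fun i => abs_nonneg _) ?_ (haux _ (sub_nonneg.2 (hab' j)))
      intro i
      have h1 := hdist (φ i) k j
      have h2 : (b j - a j)/((φ i : ℝ)+1) ≤ (b j - a j)/((i:ℝ)+1) := by
        have hle0 := hphi_ge i
        have hle : ((i:ℝ)+1) ≤ ((φ i : ℝ)+1) := by
          have h' : (i:ℝ) ≤ (φ i : ℝ) := by exact_mod_cast hle0
          linarith
        gcongr
        exact sub_nonneg.2 (hab' j)
      exact le_trans h1 h2
    have hsum := (hu_conv j).add hdiff
    have heq : (fun i => u (φ i) j + (w (φ i) k j - u (φ i) j))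
        = fun i => w (φ i) k j := by
      funext i; ring
    rw [heq] at hsum
    simpa using hsum
  have hc_conv : ∀ k, Tendsto (fun i => c (φ i) k) atTop (𝓝 (Fstar k)) := by
    intro k
    have hdiff : Tendsto (fun i => c (φ i) k - Fstar k) atTop (𝓝 0) := by
      rw [tendsto_zero_iff_abs_tendsto_zero]
      apply squeeze_zero (g := fun i : ℕ => δ k / ((i:ℝ)+1))
        (fun i => abs_nonneg _) ?_ (haux _ (hδ k).le)
      intro i
      have h1 := hc_lo (φ i) k
      have h2 := hc_hi (φ i) k
      have h3 : ε (φ i) k ≤ δ k / ((i:ℝ)+1) := by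
        rw [hεdef]
        simp only
        have hle : ((i:ℝ)+1) ≤ ((φ i : ℝ)+2) := by
          have := hphi_ge i
          have : (i:ℝ) ≤ (φ i : ℝ) := by exact_mod_cast this
          linarith
        gcongr
        exact (hδ k).le
      have h4 : |c (φ i) k - Fstar k| ≤ ε (φ i) k := abs_le.2 ⟨by linarith, by linarith⟩
      exact le_trans h4 h3
    have hsum := hdiff.add (tendsto_const_nhds (x := Fstar k) (f := atTop))
    have heq : (fun i => (c (φ i) k - Fstar k) + Fstar k) = fun i => c (φ i) k := by
      funext i; ring
    rw [heq] at hsum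
    simpa using hsum
  have hFu : Tendsto (fun i => F (u (φ i))) atTop (𝓝 (F xh)) := by
    apply ((hcont.continuousWithinAt hxhmem).tendsto).comp
    apply tendsto_nhdsWithin_of_tendsto_nhds_of_eventually_within _ hconv
    exact Filter.Eventually.of_forall (fun i => hu_mem (φ i))
  have hFw : ∀ k, Tendsto (fun i => F (w (φ i) k)) atTop (𝓝 (F xh)) := by
    intro k
    apply ((hcont.continuousWithinAt hxhmem).tendsto).comp
    apply tendsto_nhdsWithin_of_tendsto_nhds_of_eventually_within _ (hw_conv k)
    exact Filter.Eventually.of_forall (fun i => hw_mem (φ i) k)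
  refine ⟨xh, hxhmem, ?_⟩
  funext k
  have h1 : F xh k ≤ Fstar k := by
    apply le_of_tendsto_of_tendsto' (((continuous_apply k).tendsto (F xh)).comp hFu) (hc_conv k)
    intro i
    exact (hu_lt (φ i) k).le
  have h2 : Fstar k ≤ F xh k := by
    apply le_of_tendsto_of_tendsto' (hc_conv k)
      (((continuous_apply k).tendsto (F xh)).comp (hFw k))
    intro i
    exact hw_ge (φ i) k
  exact le_antisymm h1 h2
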